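/- Let p, p', q, q' be integers with Δ := p·q' − p'·q > 0. Suppose that either Δ = 1, or Δ = 2, or there is a pair (m,m') among (p,p'), (q,q'), (−p−q, −p'−q') such that Δ divides both m and m'. Then there is no ordered pair (η, η') of complex numbers of modulus 1 with η^p·η'^q = 1, η^{p'}·η'^{q'} = 1, η ≠ η', η ≠ 1 and η' ≠ 1. -/
import Mathlib

/-- From the two relations, `a` raised to the determinant power is 1. -/
lemma aux_zpow_det (a b : ℂ) (ha : a ≠ 0) (hb : b ≠ 0) (p q p' q' : ℤ)
    (h1 : a ^ p * b ^ q = 1) (h2 : a ^ p' * b ^ q' = 1) :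
    a ^ (p * q' - p' * q) = 1 := by
  have e1 : a ^ (p * q') * b ^ (q * q') = 1 := by
    rw [zpow_mul, zpow_mul, ← mul_zpow, h1, one_zpow]
  have e2 : a ^ (p' * q) * b ^ (q' * q) = 1 := by
    rw [zpow_mul, zpow_mul, ← mul_zpow, h2, one_zpow]
  have key : a ^ (p * q' - p' * q) * (a ^ (p' * q) * b ^ (q' * q))
      = a ^ (p * q') * b ^ (q * q') := by
    rw [← mul_assoc, ← zpow_add₀ ha, sub_add_cancel, mul_comm q' q]
  rw [e2, mul_one, e1] at key
  exact key

/-- Integer-linear combination of exponents of roots of unity. -/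
lemma aux_comb (x : ℂ) (hx : x ≠ 0) {a b : ℤ} (ha : x ^ a = 1) (hb : x ^ b = 1)
    (s t : ℤ) : x ^ (a * s + b * t) = 1 := by
  rw [zpow_add₀ hx, zpow_mul, zpow_mul, ha, hb, one_zpow, one_zpow, one_mul]

theorem double_point_vanishing (p p' q q' : ℤ) (hΔ : 0 < p * q' - p' * q)
    (h : p * q' - p' * q = 1 ∨ p * q' - p' * q = 2 ∨
      ∃ m m' : ℤ, ((m, m') = (p, p') ∨ (m, m') = (q, q') ∨ (m, m') = (-p - q, -p' - q')) ∧
        (p * q' - p' * q) ∣ m ∧ (p * q' - p' * q) ∣ m') :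
    ¬ ∃ η η' : ℂ, ‖η‖ = 1 ∧ ‖η'‖ = 1 ∧
      η ^ p * η' ^ q = 1 ∧ η ^ p' * η' ^ q' = 1 ∧ η ≠ η' ∧ η ≠ 1 ∧ η' ≠ 1 := by
  rintro ⟨η, η', hnη, hnη', h1, h2, hne, hη1, hη'1⟩
  have hη0 : η ≠ 0 := by intro h0; rw [h0] at hnη; simp at hnη
  have hη'0 : η' ≠ 0 := by intro h0; rw [h0] at hnη'; simp at hnη'
  have hΔ0 : p * q' - p' * q ≠ 0 := ne_of_gt hΔ
  -- η and η' are (p q' - p' q)-th roots of unity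
  have hηΔ : η ^ (p * q' - p' * q) = 1 :=
    aux_zpow_det η η' hη0 hη'0 p q p' q' h1 h2
  have hη'Δ : η' ^ (p * q' - p' * q) = 1 := by
    have := aux_zpow_det η' η hη'0 hη0 q p q' p'
      (by rw [mul_comm]; exact h1) (by rw [mul_comm]; exact h2)
    have hexp : q * p' - q' * p = -(p * q' - p' * q) := by ring
    rw [hexp, zpow_neg, inv_eq_one] at this
    exact this
  rcases h with h1d | h2d | ⟨m, m', hmm, hdm, hdm'⟩
  · -- Δ = 1
    rw [h1d, zpow_one] at hηΔ
    exact hη1 hηΔ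
  · -- Δ = 2
    rw [h2d] at hηΔ hη'Δ
    have sq1 : ∀ x : ℂ, x ^ (2 : ℤ) = 1 → x ≠ 1 → x = -1 := by
      intro x hx hx1
      have hfac : (x - 1) * (x + 1) = 0 := by
        have hx2 : x * x = 1 := by rw [← zpow_two]; exact hx
        linear_combination hx2
      rcases mul_eq_zero.mp hfac with h | h
      · exact absurd (by linear_combination h) hx1
      · linear_combination h
    have e1 := sq1 η hηΔ hη1
    have e2 := sq1 η' hη'Δ hη'1
    exact hne (e1.trans e2.symm)
  · rcases hmm with hmm | hmm | hmm <;>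
      rw [Prod.mk.injEq] at hmm <;> (rw [hmm.1] at hdm; rw [hmm.2] at hdm')
    · -- Δ ∣ p, Δ ∣ p'
      obtain ⟨a, hpa⟩ := hdm
      obtain ⟨a', hpa'⟩ := hdm'
      have hbez : q' * a + q * (-a') = 1 := by
        have hcanc : (p * q' - p' * q) * (q' * a + q * (-a'))
            = (p * q' - p' * q) * 1 := by
          linear_combination (-q') * hpa + q * hpa'
        exact mul_left_cancel₀ hΔ0 hcanc
      have hηp : η ^ p = 1 := by rw [hpa, zpow_mul, hηΔ, one_zpow]
      have hηp' : η ^ p' = 1 := by rw [hpa', zpow_mul, hηΔ, one_zpow]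
      have hq : η' ^ q = 1 := by rw [hηp, one_mul] at h1; exact h1
      have hq' : η' ^ q' = 1 := by rw [hηp', one_mul] at h2; exact h2
      have := aux_comb η' hη'0 hq' hq a (-a')
      rw [hbez, zpow_one] at this
      exact hη'1 this
    · -- Δ ∣ q, Δ ∣ q'
      obtain ⟨b, hqb⟩ := hdm
      obtain ⟨b', hqb'⟩ := hdm'
      have hbez : p * b' + p' * (-b) = 1 := by
        have hcanc : (p * q' - p' * q) * (p * b' + p' * (-b))
            = (p * q' - p' * q) * 1 := by
          linear_combination (-p) * hqb' + p' * hqb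
        exact mul_left_cancel₀ hΔ0 hcanc
      have hη'q : η' ^ q = 1 := by rw [hqb, zpow_mul, hη'Δ, one_zpow]
      have hη'q' : η' ^ q' = 1 := by rw [hqb', zpow_mul, hη'Δ, one_zpow]
      have hp : η ^ p = 1 := by rw [hη'q, mul_one] at h1; exact h1
      have hp' : η ^ p' = 1 := by rw [hη'q', mul_one] at h2; exact h2
      have := aux_comb η hη0 hp hp' b' (-b)
      rw [hbez, zpow_one] at this
      exact hη1 this
    · -- Δ ∣ p + q, Δ ∣ p' + q'
      obtain ⟨c, hc⟩ := hdm
      obtain ⟨c', hc'⟩ := hdm'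
      -- -p - q = Δ c, -p' - q' = Δ c'
      have hbez : q * c' + q' * (-c) = 1 := by
        have hcanc : (p * q' - p' * q) * (q * c' + q' * (-c))
            = (p * q' - p' * q) * 1 := by
          linear_combination (-q) * hc' + q' * hc
        exact mul_left_cancel₀ hΔ0 hcanc
      set w : ℂ := η / η' with hw
      have hw0 : w ≠ 0 := div_ne_zero hη0 hη'0
      have hwq : w ^ q = 1 := by
        have hq : η' ^ q = (η ^ p)⁻¹ := eq_inv_of_mul_eq_one_right h1
        have : w ^ q = η ^ (q + p) := by
          rw [hw, div_zpow, hq, div_eq_mul_inv, inv_inv, ← zpow_add₀ hη0]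
        rw [this, show q + p = (p * q' - p' * q) * (-c) by linarith [hc],
          zpow_mul, hηΔ, one_zpow]
      have hwq' : w ^ q' = 1 := by
        have hq' : η' ^ q' = (η ^ p')⁻¹ := eq_inv_of_mul_eq_one_right h2
        have : w ^ q' = η ^ (q' + p') := by
          rw [hw, div_zpow, hq', div_eq_mul_inv, inv_inv, ← zpow_add₀ hη0]
        rw [this, show q' + p' = (p * q' - p' * q) * (-c') by linarith [hc'],
          zpow_mul, hηΔ, one_zpow]
      have hw1 := aux_comb w hw0 hwq hwq' c' (-c)
      rw [hbez, zpow_one] at hw1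
      exact hne (div_eq_one_iff_eq hη'0 |>.mp hw1)
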